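/- For a generalized coarse-graining given by a POVM {Π_i} (positive semidefinite operators summing to the identity), observational entropy S_C(ρ) = -∑_i p_i ln(p_i/V_i) with p_i = tr(Π_i ρ) and V_i = tr(Π_i) satisfies S_vN(ρ) ≤ S_C(ρ) ≤ ln(dim H). -/

import Mathlib

/-- termwise inequality for the lower bound -/
lemma term_ineq (c l r : ℝ) (hc : 0 ≤ c) (hl : 0 ≤ l) (hr : 0 ≤ r)
    (hpos : 0 < c * l → 0 < r) :
    c * l - c * r ≤ c * (l * Real.log l) - c * l * Real.log r := by
  rcases eq_or_lt_of_le hc with hc0 | hc0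
  · simp [← hc0]
  rcases eq_or_lt_of_le hl with hl0 | hl0
  · simp only [← hl0, mul_zero, zero_mul, Real.log_zero, sub_zero, zero_sub, mul_zero, zero_mul]
    nlinarith
  have hr0 : 0 < r := hpos (by positivity)
  have h1 : Real.log (r / l) ≤ r / l - 1 := Real.log_le_sub_one_of_pos (by positivity)
  rw [Real.log_div (ne_of_gt hr0) (ne_of_gt hl0)] at h1
  have h2 : 1 - r / l ≤ Real.log l - Real.log r := by linarith
  have h3 : c * l * (1 - r / l) ≤ c * l * (Real.log l - Real.log r) := by
    apply mul_le_mul_of_nonneg_left h2 (by positivity)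
  have h4 : c * l * (1 - r / l) = c * l - c * r := by field_simp
  nlinarith [h3, h4]

lemma key_real {ι n : Type*} [Fintype ι] [Fintype n]
    (lam : n → ℝ) (hlam : ∀ x, 0 ≤ lam x) (hsum : ∑ x, lam x = 1)
    (a : ι → n → ℝ) (ha : ∀ i x, 0 ≤ a i x) (hacol : ∀ x, ∑ i, a i x = 1) :
    (∑ i, (∑ x, a i x * lam x) * Real.log ((∑ x, a i x * lam x) / (∑ x, a i x))
        ≤ ∑ x, lam x * Real.log (lam x)) ∧
    (-∑ i, (∑ x, a i x * lam x) * Real.log ((∑ x, a i x * lam x) / (∑ x, a i x))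
        ≤ Real.log (Fintype.card n)) := by
  set p : ι → ℝ := fun i => ∑ x, a i x * lam x with hp
  set V : ι → ℝ := fun i => ∑ x, a i x with hV
  have hpnn : ∀ i, 0 ≤ p i := fun i => Finset.sum_nonneg fun x _ => mul_nonneg (ha i x) (hlam x)
  have hVnn : ∀ i, 0 ≤ V i := fun i => Finset.sum_nonneg fun x _ => ha i x
  have hV0 : ∀ i, V i = 0 → p i = 0 := by
    intro i h
    have : ∀ x ∈ Finset.univ, a i x = 0 := by
      intro x _
      exact (Finset.sum_eq_zero_iff_of_nonneg (fun x _ => ha i x)).mp h x (Finset.mem_univ x)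
    exact Finset.sum_eq_zero fun x _ => by rw [this x (Finset.mem_univ x), zero_mul]
  have hpV : ∀ i, p i ≤ V i → True := fun _ _ => trivial
  have hpsum : ∑ i, p i = 1 := by
    rw [hp, Finset.sum_comm]
    simp_rw [← Finset.sum_mul, hacol, one_mul, hsum]
  have hVsum : ∑ i, V i = (Fintype.card n : ℝ) := by
    rw [hV, Finset.sum_comm]
    simp [hacol]
  -- key pointwise positivity: p i > 0 implies V i > 0
  have hpV0 : ∀ i, 0 < p i → 0 < V i := by
    intro i hi
    rcases eq_or_lt_of_le (hVnn i) with h | h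
    · rw [hV0 i h.symm] at hi; exact absurd hi (lt_irrefl 0)
    · exact h
  constructor
  · -- lower bound: ∑ p log (p/V) ≤ ∑ lam log lam
    have hrw1 : ∑ x, lam x * Real.log (lam x)
        = ∑ i, ∑ x, a i x * (lam x * Real.log (lam x)) := by
      rw [Finset.sum_comm]
      congr 1; ext x
      rw [← Finset.sum_mul, hacol, one_mul]
    have hrw2 : ∑ i, p i * Real.log (p i / V i)
        = ∑ i, ∑ x, (a i x * lam x) * Real.log (p i / V i) := by
      congr 1; ext i; rw [← Finset.sum_mul]
    rw [hrw1, hrw2]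
    have step : ∀ i ∈ Finset.univ, ∑ x, (a i x * lam x) * Real.log (p i / V i)
        ≤ ∑ x, (a i x * (lam x * Real.log (lam x)) - (a i x * lam x - a i x * (p i / V i))) := by
      intro i _
      apply Finset.sum_le_sum
      intro x _
      have := term_ineq (a i x) (lam x) (p i / V i) (ha i x) (hlam x)
        (div_nonneg (hpnn i) (hVnn i))
        (by intro h
            have hpx : 0 < p i := lt_of_lt_of_le h (Finset.single_le_sum
              (f := fun x => a i x * lam x) (fun x _ => mul_nonneg (ha i x) (hlam x))
              (Finset.mem_univ x))
            exact div_pos hpx (hpV0 i hpx))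
      linarith [this]
    have total := Finset.sum_le_sum step
    have collapse : ∑ i, ∑ x, (a i x * (lam x * Real.log (lam x)) - (a i x * lam x - a i x * (p i / V i)))
        = (∑ i, ∑ x, a i x * (lam x * Real.log (lam x))) - (∑ i, p i) + ∑ i, (p i / V i) * V i := by
      simp_rw [Finset.sum_sub_distrib]
      have : ∀ i, ∑ x, a i x * (p i / V i) = (p i / V i) * V i := by
        intro i; rw [← Finset.sum_mul, mul_comm]
      simp_rw [this]
      have : ∀ i, ∑ x, a i x * lam x = p i := fun i => rfl
      simp_rw [this]
      ring
    have hrV : ∑ i, (p i / V i) * V i = 1 := by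
      rw [← hpsum]
      apply Finset.sum_congr rfl
      intro i _
      by_cases h : V i = 0
      · rw [h, mul_zero, hV0 i h]
      · field_simp
    rw [collapse, hpsum, hrV] at total
    linarith [total]
  · -- upper bound
    show -∑ i, p i * Real.log (p i / V i) ≤ Real.log (Fintype.card n)
    have hN : (0 : ℝ) < Fintype.card n := by
      by_contra h
      push_neg at h
      have : Fintype.card n = 0 := by exact_mod_cast le_antisymm (by exact_mod_cast h) (Nat.zero_le _)
      have hempty : IsEmpty n := Fintype.card_eq_zero_iff.mp this
      rw [Finset.univ_eq_empty, Finset.sum_empty] at hsum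
      exact one_ne_zero hsum.symm
    have step : ∀ i ∈ Finset.univ, p i - V i / (Fintype.card n : ℝ)
        ≤ p i * (Real.log (p i / V i) + Real.log (Fintype.card n)) := by
      intro i _
      rcases eq_or_lt_of_le (hpnn i) with h0 | h0
      · rw [← h0, zero_mul]
        have : 0 ≤ V i / (Fintype.card n : ℝ) := div_nonneg (hVnn i) (le_of_lt hN)
        linarith
      · have hVi : 0 < V i := hpV0 i h0
        have h1 : Real.log (V i / (p i * (Fintype.card n : ℝ)))
            ≤ V i / (p i * (Fintype.card n : ℝ)) - 1 :=
          Real.log_le_sub_one_of_pos (by positivity)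
        rw [Real.log_div (ne_of_gt hVi) (ne_of_gt (by positivity : (0:ℝ) < p i * (Fintype.card n : ℝ))),
          Real.log_mul (ne_of_gt h0) (ne_of_gt hN)] at h1
        rw [Real.log_div (ne_of_gt h0) (ne_of_gt hVi)]
        have h2 : 1 - V i / (p i * (Fintype.card n : ℝ))
            ≤ Real.log (p i) - Real.log (V i) + Real.log (Fintype.card n) := by linarith
        have h3 : p i * (1 - V i / (p i * (Fintype.card n : ℝ)))
            ≤ p i * (Real.log (p i) - Real.log (V i) + Real.log (Fintype.card n)) :=
          mul_le_mul_of_nonneg_left h2 (le_of_lt h0)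
        have h4 : p i * (1 - V i / (p i * (Fintype.card n : ℝ)))
            = p i - V i / (Fintype.card n : ℝ) := by field_simp
        linarith
    have total := Finset.sum_le_sum step
    rw [Finset.sum_sub_distrib] at total
    have hVdiv : ∑ i, V i / (Fintype.card n : ℝ) = 1 := by
      rw [← Finset.sum_div, hVsum, div_self (ne_of_gt hN)]
    simp_rw [mul_add] at total
    rw [Finset.sum_add_distrib, ← Finset.sum_mul] at total
    rw [hpsum] at total
    rw [hVdiv, one_mul] at total
    linarith


open scoped Matrix ComplexOrder

/-- For a POVM `{Q i}` (positive semidefinite operators summing to the identity),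
observational entropy satisfies `S_vN(ρ) ≤ S_C(ρ) ≤ ln (dim H)`. -/
theorem obs_entropy_povm_bounds
    {n : Type*} [Fintype n] [DecidableEq n]
    {ι : Type*} [Fintype ι]
    (ρ : Matrix n n ℂ) (hρ : ρ.PosSemidef) (hρ1 : ρ.trace = 1)
    (Q : ι → Matrix n n ℂ)
    (hQ : ∀ i, (Q i).PosSemidef)
    (hQsum : ∑ i, Q i = 1) :
    -∑ x, hρ.1.eigenvalues x * Real.log (hρ.1.eigenvalues x)
        ≤ -∑ i, (Q i * ρ).trace.re * Real.log ((Q i * ρ).trace.re / (Q i).trace.re) ∧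
      -∑ i, (Q i * ρ).trace.re * Real.log ((Q i * ρ).trace.re / (Q i).trace.re)
        ≤ Real.log (Fintype.card n) := by
  set U : Matrix n n ℂ := (hρ.1.eigenvectorUnitary : Matrix n n ℂ) with hU
  have hUU : star U * U = 1 := Matrix.mem_unitaryGroup_iff'.mp hρ.1.eigenvectorUnitary.2
  have hUU' : U * star U = 1 := Matrix.mem_unitaryGroup_iff.mp hρ.1.eigenvectorUnitary.2
  set lam : n → ℝ := hρ.1.eigenvalues with hlamdef
  set D : Matrix n n ℂ := Matrix.diagonal (fun x => (lam x : ℂ)) with hD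
  have hspec : ρ = U * D * star U := hρ.1.spectral_theorem
  set B : ι → Matrix n n ℂ := fun i => star U * Q i * U with hB
  have hBpsd : ∀ i, (B i).PosSemidef := by
    intro i
    show (star U * Q i * U).PosSemidef
    simpa [Matrix.star_eq_conjTranspose] using (hQ i).conjTranspose_mul_mul_same U
  set a : ι → n → ℝ := fun i x => (B i x x).re with ha_def
  have hdiag : ∀ i x, 0 ≤ B i x x := by
    intro i x
    have := (hBpsd i).dotProduct_mulVec_nonneg (Pi.single x 1)
    simpa [dotProduct, Pi.single_apply, Finset.sum_ite_eq] using this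
  have ha : ∀ i x, 0 ≤ a i x := by
    intro i x
    have := hdiag i x
    rw [Complex.le_def] at this
    simpa using this.1
  have hBsum : ∑ i, B i = 1 := by
    rw [hB, ← Finset.sum_mul, ← Finset.mul_sum, hQsum, mul_one, hUU]
  have hacol : ∀ x, ∑ i, a i x = 1 := by
    intro x
    rw [ha_def, ← Complex.re_sum]
    have : ∑ i, B i x x = (1 : Matrix n n ℂ) x x := by
      rw [← hBsum, Matrix.sum_apply]
    rw [this, Matrix.one_apply_eq]
    simp
  have htr : ∀ M : Matrix n n ℂ, (M * ρ).trace = ∑ x, (star U * M * U) x x * (lam x : ℂ) := by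
    intro M
    have e1 : M * ρ = (M * U * D) * star U := by rw [hspec, ← mul_assoc, ← mul_assoc]
    rw [e1, Matrix.trace_mul_comm, ← mul_assoc, ← mul_assoc]
    simp [Matrix.trace, Matrix.diag, Matrix.mul_diagonal, hD]
  have htrQ : ∀ i, (Q i).trace = ∑ x, B i x x := by
    intro i
    have e1 : B i = (star U * Q i) * U := by rw [hB, mul_assoc]; rw [← mul_assoc]
    have : (B i).trace = (Q i).trace := by
      rw [e1, Matrix.trace_mul_comm, ← mul_assoc, hUU', one_mul]
    rw [← this]; simp [Matrix.trace, Matrix.diag]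
  have hsumlam : ∑ x, lam x = 1 := by
    have e1 : ρ.trace = ∑ x, (lam x : ℂ) := by
      have e2 : ρ = (U * D) * star U := by rw [hspec]
      rw [e2, Matrix.trace_mul_comm, ← mul_assoc, hUU, one_mul]
      simp [Matrix.trace, Matrix.diag, hD, Matrix.diagonal]
    rw [hρ1] at e1
    have := congrArg Complex.re e1
    simpa using this.symm
  have hlam : ∀ x, 0 ≤ lam x := fun x => hρ.eigenvalues_nonneg x
  have hp_eq : ∀ i, (Q i * ρ).trace.re = ∑ x, a i x * lam x := by
    intro i
    rw [htr (Q i), Complex.re_sum]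
    apply Finset.sum_congr rfl
    intro x _
    rw [ha_def]
    simp [Complex.mul_re, hB]
  have hV_eq : ∀ i, (Q i).trace.re = ∑ x, a i x := by
    intro i
    rw [htrQ i, Complex.re_sum]
  have key := key_real lam hlam hsumlam a ha hacol
  simp_rw [hp_eq, hV_eq]
  constructor
  · linarith [key.1]
  · exact key.2
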